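/- Av(213)𝒜 = Av(2143). -/

import Mathlib

/-- A permutation of length `n` (a bijection of `{0, …, n-1}`, identified with the
sequence of its values), packaged with its length. -/
abbrev PermSig : Type := Σ n : ℕ, Equiv.Perm (Fin n)

/-- Pattern containment: the permutation `α` of length `k` is contained in the
permutation `τ` of length `n` if there is an increasing choice of positions on which
`τ` is order-isomorphic to `α`. -/
def Contains {k n : ℕ} (α : Equiv.Perm (Fin k)) (τ : Equiv.Perm (Fin n)) : Prop :=
  ∃ f : Fin k ↪o Fin n, ∀ i j : Fin k, α i < α j ↔ τ (f i) < τ (f j)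

/-- The avoidance class `Av B`: all permutations containing no member of `B`. -/
def Av (B : Set PermSig) : Set PermSig :=
  {τ : PermSig | ∀ β ∈ B, ¬ Contains β.2 τ.2}

/-- A pattern class: a set of permutations downward closed under pattern containment. -/
def IsPatternClass (C : Set PermSig) : Prop :=
  ∀ (k n : ℕ) (α : Equiv.Perm (Fin k)) (τ : Equiv.Perm (Fin n)),
    Contains α τ → (⟨n, τ⟩ : PermSig) ∈ C → (⟨k, α⟩ : PermSig) ∈ C

/-- The base relation of the poset `P(τ)` on values: `x ≺ y` whenever `x` appears
before `y` in `τ` and either `x > y`, or some value `z` appears between `x` and `y`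
in `τ` with `x < y < z`. -/
def PQBase {n : ℕ} (τ : Equiv.Perm (Fin n)) (x y : Fin n) : Prop :=
  τ.symm x < τ.symm y ∧
    (y < x ∨ ∃ z : Fin n, τ.symm x < τ.symm z ∧ τ.symm z < τ.symm y ∧ x < y ∧ y < z)

/-- The poset `P(τ)`: the transitive closure of the base relation. -/
def PQ {n : ℕ} (τ : Equiv.Perm (Fin n)) : Fin n → Fin n → Prop :=
  Relation.TransGen (PQBase τ)

/-- `σ` is a linear extension of `P(τ)`; equivalently, `(σ, τ)` is an allowable pair,
i.e. a priority queue can produce output `τ` from input `σ`. -/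
def Allowable {n : ℕ} (σ τ : Equiv.Perm (Fin n)) : Prop :=
  ∀ x y : Fin n, PQ τ x y → σ.symm x < σ.symm y

/-- `C𝒜`: the set of permutations obtainable by a priority queue from an input in `C`. -/
def ImageA (C : Set PermSig) : Set PermSig :=
  {τ : PermSig | ∃ σ : Equiv.Perm (Fin τ.1), (⟨τ.1, σ⟩ : PermSig) ∈ C ∧ Allowable σ τ.2}

/-- The pattern `213` (written 0-indexed). -/
noncomputable def p213 : Equiv.Perm (Fin 3) :=
  Equiv.ofBijective (![1, 0, 2] : Fin 3 → Fin 3) (by decide)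

/-- The pattern `2143` (written 0-indexed). -/
noncomputable def p2143 : Equiv.Perm (Fin 4) :=
  Equiv.ofBijective (![1, 0, 3, 2] : Fin 4 → Fin 4) (by decide)

/-! ### Auxiliary lemmas -/

section Aux
open List
variable {n : ℕ} (τ : Equiv.Perm (Fin n))

theorem pq_pos {x y : Fin n} (h : PQ τ x y) : τ.symm x < τ.symm y := by
  induction h with
  | single h => exact h.1
  | tail _ h ih => exact ih.trans h.1

theorem pq_lt {x y : Fin n} (h : PQ τ x y) :
    x < y → ∃ z : Fin n, τ.symm x < τ.symm z ∧ τ.symm z < τ.symm y ∧ y < z := by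
  induction h with
  | single h =>
    intro hxy
    rcases h.2 with h' | ⟨z, hz1, hz2, _, hz3⟩
    · exact absurd h' (not_lt.2 hxy.le)
    · exact ⟨z, hz1, hz2, hz3⟩
  | @tail w y hw hb ih =>
    intro hxy
    rcases hb.2 with h' | ⟨z, hz1, hz2, _, hz3⟩
    · obtain ⟨z, h1, h2, h3⟩ := ih (hxy.trans h')
      exact ⟨z, h1, h2.trans hb.1, h'.trans h3⟩
    · exact ⟨z, (pq_pos τ hw).trans hz1, hz2, hz3⟩

theorem strictMono_vec3 {α : Type*} [Preorder α] {x y z : α} (h1 : x < y) (h2 : y < z) :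
    StrictMono ![x, y, z] := by
  intro a b hab
  fin_cases a <;> fin_cases b <;>
    first
      | exact absurd hab (by decide)
      | simpa using h1
      | simpa using h2
      | simpa using h1.trans h2

theorem strictMono_vec4 {α : Type*} [Preorder α] {x y z w : α}
    (h1 : x < y) (h2 : y < z) (h3 : z < w) : StrictMono ![x, y, z, w] := by
  intro a b hab
  fin_cases a <;> fin_cases b <;>
    first
      | exact absurd hab (by decide)
      | simpa using h1
      | simpa using h2
      | simpa using h3
      | simpa using h1.trans h2
      | simpa using h2.trans h3
      | simpa using (h1.trans h2).trans h3

theorem contains_2143_intro {p : Fin 4 → Fin n} (hp : StrictMono p)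
    (h10 : τ (p 1) < τ (p 0)) (h03 : τ (p 0) < τ (p 3)) (h32 : τ (p 3) < τ (p 2)) :
    Contains p2143 τ := by
  refine ⟨OrderEmbedding.ofStrictMono p hp, ?_⟩
  intro i j
  fin_cases i <;> fin_cases j <;>
    simp [p2143, Equiv.ofBijective] <;>
    first
      | exact h10 | exact h03 | exact h32
      | exact h10.trans h03 | exact h03.trans h32 | exact (h10.trans h03).trans h32
      | exact h10.le | exact h03.le | exact h32.le
      | exact (h10.trans h03).le | exact (h03.trans h32).le
      | exact ((h10.trans h03).trans h32).le

theorem contains_213_intro {σ : Equiv.Perm (Fin n)} {q : Fin 3 → Fin n} (hq : StrictMono q)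
    (h10 : σ (q 1) < σ (q 0)) (h02 : σ (q 0) < σ (q 2)) : Contains p213 σ := by
  refine ⟨OrderEmbedding.ofStrictMono q hq, ?_⟩
  intro i j
  fin_cases i <;> fin_cases j <;>
    simp [p213, Equiv.ofBijective] <;>
    first
      | exact h10 | exact h02 | exact h10.trans h02
      | exact h10.le | exact h02.le | exact (h10.trans h02).le

/-- If `τ` contains `2143` then every allowable input for `τ` contains `213`. -/
theorem contains213_of_allowable {σ : Equiv.Perm (Fin n)} (hall : Allowable σ τ)
    (h : Contains p2143 τ) : Contains p213 σ := by
  obtain ⟨f, hf⟩ := h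
  have hab : τ (f 1) < τ (f 0) := (hf 1 0).1 (by simp [p2143, Equiv.ofBijective])
  have hbc : τ (f 0) < τ (f 3) := (hf 0 3).1 (by simp [p2143, Equiv.ofBijective])
  have hcd : τ (f 3) < τ (f 2) := (hf 3 2).1 (by simp [p2143, Equiv.ofBijective])
  have h1 : PQ τ (τ (f 0)) (τ (f 1)) := by
    refine Relation.TransGen.single ⟨?_, Or.inl hab⟩
    simpa using f.strictMono (show (0 : Fin 4) < 1 by decide)
  have h2 : PQ τ (τ (f 1)) (τ (f 3)) := by
    refine Relation.TransGen.single ⟨?_, Or.inr ⟨τ (f 2), ?_, ?_, hab.trans hbc, hcd⟩⟩ <;>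
      simpa using f.strictMono (by decide)
  have g1 : σ.symm (τ (f 0)) < σ.symm (τ (f 1)) := hall _ _ h1
  have g2 : σ.symm (τ (f 1)) < σ.symm (τ (f 3)) := hall _ _ h2
  refine contains_213_intro (strictMono_vec3 g1 g2) ?_ ?_ <;>
    simp [hab, hbc]

/-- the element of `S` appearing first in `τ`. -/
noncomputable def tfirst (S : Finset (Fin n)) (h : S.Nonempty) : Fin n :=
  τ ((S.image τ.symm).min' (h.image _))

theorem tfirst_mem (S : Finset (Fin n)) (h : S.Nonempty) : tfirst τ S h ∈ S := by
  have hm := (S.image τ.symm).min'_mem (h.image _)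
  rw [Finset.mem_image] at hm
  obtain ⟨x, hx, hx'⟩ := hm
  have : tfirst τ S h = x := by rw [tfirst, ← hx', Equiv.apply_symm_apply]
  rwa [this]

theorem tfirst_min (S : Finset (Fin n)) (h : S.Nonempty) {x : Fin n} (hx : x ∈ S) :
    τ.symm (tfirst τ S h) ≤ τ.symm x := by
  rw [tfirst, Equiv.symm_apply_apply]
  exact Finset.min'_le _ _ (Finset.mem_image_of_mem _ hx)

theorem tfirst_lt (S : Finset (Fin n)) (h : S.Nonempty) {x : Fin n} (hx : x ∈ S)
    (hne : x ≠ tfirst τ S h) : τ.symm (tfirst τ S h) < τ.symm x :=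
  lt_of_le_of_ne (tfirst_min τ S h hx) (fun he => hne (τ.symm.injective he.symm))

/-- the 213-avoiding linear extension, built recursively. -/
noncomputable def build (S : Finset (Fin n)) : List (Fin n) :=
  if h : S.Nonempty then
    tfirst τ S h ::
      (build (S.filter fun x => tfirst τ S h < x) ++ build (S.filter fun x => x < tfirst τ S h))
  else []
termination_by S.card
decreasing_by
  · exact Finset.card_lt_card
      (Finset.filter_ssubset.2 ⟨_, tfirst_mem τ S h, lt_irrefl _⟩)
  · exact Finset.card_lt_card
      (Finset.filter_ssubset.2 ⟨_, tfirst_mem τ S h, lt_irrefl _⟩)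

theorem build_eq (S : Finset (Fin n)) (h : S.Nonempty) :
    build τ S = tfirst τ S h ::
      (build τ (S.filter fun x => tfirst τ S h < x) ++
        build τ (S.filter fun x => x < tfirst τ S h)) := by
  rw [build.eq_def, dif_pos h]

theorem build_empty : build τ ∅ = [] := by
  rw [build.eq_def, dif_neg (by simp)]

theorem mem_build : ∀ (S : Finset (Fin n)) (x : Fin n), x ∈ build τ S ↔ x ∈ S := by
  intro S
  induction S using Finset.strongInduction with
  | _ S ih =>
  intro x
  by_cases h : S.Nonempty
  · have hm := tfirst_mem τ S h
    have ssA : (S.filter fun x => tfirst τ S h < x) ⊂ S :=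
      Finset.filter_ssubset.2 ⟨_, hm, lt_irrefl _⟩
    have ssB : (S.filter fun x => x < tfirst τ S h) ⊂ S :=
      Finset.filter_ssubset.2 ⟨_, hm, lt_irrefl _⟩
    have hA := ih _ ssA
    have hB := ih _ ssB
    rw [build_eq τ S h]
    simp only [List.mem_cons, List.mem_append, hA, hB, Finset.mem_filter]
    constructor
    · rintro (rfl | ⟨hx, _⟩ | ⟨hx, _⟩) <;> assumption
    · intro hx
      rcases lt_trichotomy x (tfirst τ S h) with h' | h' | h'
      · exact Or.inr (Or.inr ⟨hx, h'⟩)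
      · exact Or.inl h'
      · exact Or.inr (Or.inl ⟨hx, h'⟩)
  · rw [Finset.not_nonempty_iff_eq_empty.1 h, build_empty]
    simp

theorem nodup_build : ∀ S : Finset (Fin n), (build τ S).Nodup := by
  intro S
  induction S using Finset.strongInduction with
  | _ S ih =>
  by_cases h : S.Nonempty
  · have hm := tfirst_mem τ S h
    have ssA : (S.filter fun x => tfirst τ S h < x) ⊂ S :=
      Finset.filter_ssubset.2 ⟨_, hm, lt_irrefl _⟩
    have ssB : (S.filter fun x => x < tfirst τ S h) ⊂ S :=
      Finset.filter_ssubset.2 ⟨_, hm, lt_irrefl _⟩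
    rw [build_eq τ S h, List.nodup_cons, List.nodup_append]
    refine ⟨?_, ih _ ssA, ih _ ssB, ?_⟩
    · intro hmem
      rw [List.mem_append, mem_build, mem_build, Finset.mem_filter, Finset.mem_filter] at hmem
      rcases hmem with ⟨_, h'⟩ | ⟨_, h'⟩ <;> exact absurd h' (lt_irrefl _)
    · intro a ha b hb hab
      rw [mem_build, Finset.mem_filter] at ha hb
      subst hab
      exact absurd (ha.2.trans hb.2) (lt_irrefl _)
  · rw [Finset.not_nonempty_iff_eq_empty.1 h, build_empty]; simp

/-- `build` is a linear extension of `P(τ)` when `τ` avoids `2143`. -/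
theorem ext_build (hτ : ¬ Contains p2143 τ) :
    ∀ (S : Finset (Fin n)) {x y : Fin n}, x ∈ S → y ∈ S → PQ τ x y →
      [x, y] <+ build τ S := by
  intro S
  induction S using Finset.strongInduction with
  | _ S ih =>
  intro x y hx hy hxy
  have h : S.Nonempty := ⟨x, hx⟩
  have hmS := tfirst_mem τ S h
  have ssA : (S.filter fun u => tfirst τ S h < u) ⊂ S :=
    Finset.filter_ssubset.2 ⟨_, hmS, lt_irrefl _⟩
  have ssB : (S.filter fun u => u < tfirst τ S h) ⊂ S :=
    Finset.filter_ssubset.2 ⟨_, hmS, lt_irrefl _⟩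
  rw [build_eq τ S h]
  by_cases hym : y = tfirst τ S h
  · exfalso
    rw [hym] at hxy
    exact absurd (pq_pos τ hxy) (not_lt.2 (tfirst_min τ S h hx))
  by_cases hxm : x = tfirst τ S h
  · subst hxm
    refine List.Sublist.cons₂ _ (List.singleton_sublist.2 ?_)
    rw [List.mem_append, mem_build, mem_build, Finset.mem_filter, Finset.mem_filter]
    rcases lt_trichotomy y (tfirst τ S h) with h' | h' | h'
    · exact Or.inr ⟨hy, h'⟩
    · exact absurd h' hym
    · exact Or.inl ⟨hy, h'⟩
  rcases lt_trichotomy x (tfirst τ S h) with hx' | hx' | hx'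
  · rcases lt_trichotomy y (tfirst τ S h) with hy' | hy' | hy'
    · -- both below m : recurse into B
      exact ((ih _ ssB (Finset.mem_filter.2 ⟨hx, hx'⟩) (Finset.mem_filter.2 ⟨hy, hy'⟩)
        hxy).trans (List.sublist_append_right _ _)).cons _
    · exact absurd hy' hym
    · -- x < m < y : contradiction with 2143-avoidance
      exfalso
      obtain ⟨z, hz1, hz2, hz3⟩ := pq_lt τ hxy (hx'.trans hy')
      have hpm : τ.symm (tfirst τ S h) < τ.symm x := tfirst_lt τ S h hx hxm
      refine hτ (contains_2143_intro τ
        (strictMono_vec4 hpm hz1 hz2 : StrictMono ![_, τ.symm x, τ.symm z, τ.symm y]) ?_ ?_ ?_) <;>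
        simpa using by first | exact hx' | exact hy' | exact hz3
  · exact absurd hx' hxm
  · rcases lt_trichotomy y (tfirst τ S h) with hy' | hy' | hy'
    · -- x above, y below
      refine List.Sublist.cons _ ?_
      have hxA : [x] <+ build τ (S.filter fun u => tfirst τ S h < u) :=
        List.singleton_sublist.2 ((mem_build τ _ x).2 (Finset.mem_filter.2 ⟨hx, hx'⟩))
      have hyB : [y] <+ build τ (S.filter fun u => u < tfirst τ S h) :=
        List.singleton_sublist.2 ((mem_build τ _ y).2 (Finset.mem_filter.2 ⟨hy, hy'⟩))
      exact hxA.append hyB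
    · exact absurd hy' hym
    · exact ((ih _ ssA (Finset.mem_filter.2 ⟨hx, hx'⟩) (Finset.mem_filter.2 ⟨hy, hy'⟩)
        hxy).trans (List.sublist_append_left _ _)).cons _

/-- `build` avoids the pattern 213. -/
theorem no213_build : ∀ (S : Finset (Fin n)) {a b c : Fin n}, a < b → b < c →
    ¬ ([b, a, c] <+ build τ S) := by
  intro S
  induction S using Finset.strongInduction with
  | _ S ih =>
  intro a b c hab hbc hsub
  by_cases h : S.Nonempty
  case neg =>
    rw [Finset.not_nonempty_iff_eq_empty.1 h, build_empty] at hsub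
    simp at hsub
  have hmS := tfirst_mem τ S h
  have ssA : (S.filter fun u => tfirst τ S h < u) ⊂ S :=
    Finset.filter_ssubset.2 ⟨_, hmS, lt_irrefl _⟩
  have ssB : (S.filter fun u => u < tfirst τ S h) ⊂ S :=
    Finset.filter_ssubset.2 ⟨_, hmS, lt_irrefl _⟩
  have memA : ∀ {u : Fin n}, u ∈ build τ (S.filter fun v => tfirst τ S h < v) →
      tfirst τ S h < u := fun hu => (Finset.mem_filter.1 ((mem_build τ _ _).1 hu)).2
  have memB : ∀ {u : Fin n}, u ∈ build τ (S.filter fun v => v < tfirst τ S h) →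
      u < tfirst τ S h := fun hu => (Finset.mem_filter.1 ((mem_build τ _ _).1 hu)).2
  rw [build_eq τ S h] at hsub
  cases hsub with
  | cons_cons _ h2 =>
    -- b = tfirst; [a, c] <+ A ++ B
    rw [List.sublist_append_iff] at h2
    obtain ⟨l₁, l₂, heq, s1, s2⟩ := h2
    rcases l₁ with _ | ⟨a', l₁'⟩
    · -- [a, c] <+ B, but c > b = tfirst
      rw [List.nil_append] at heq
      subst heq
      exact absurd (memB (s2.subset (by simp))) (not_lt.2 hbc.le)
    · -- a ∈ A, but a < b = tfirst
      rw [List.cons_append] at heq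
      injection heq with h1 _
      subst h1
      exact absurd (memA (s1.subset (by simp))) (not_lt.2 hab.le)
  | cons _ h2 =>
    rw [List.sublist_append_iff] at h2
    obtain ⟨l₁, l₂, heq, s1, s2⟩ := h2
    rcases l₁ with _ | ⟨x1, _ | ⟨x2, _ | ⟨x3, l⟩⟩⟩
    · rw [List.nil_append] at heq
      subst heq
      exact ih _ ssB hab hbc s2
    · -- b ∈ A, [a, c] <+ B: c < tfirst < b contradicts b < c
      rw [List.cons_append, List.nil_append] at heq
      injection heq with h1 h2'
      subst h1; subst h2'
      have hbA : tfirst τ S h < b := memA (s1.subset (by simp))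
      have hcB : c < tfirst τ S h := memB (s2.subset (by simp))
      exact absurd (hcB.trans hbA) (not_lt.2 hbc.le)
    · -- [b, a] <+ A, [c] <+ B : a > tfirst > c but a < c
      rw [List.cons_append, List.cons_append, List.nil_append] at heq
      injection heq with h1 h2'
      injection h2' with h2' h3'
      subst h1; subst h2'; subst h3'
      have haA : tfirst τ S h < a := memA (s1.subset (by simp))
      have hcB : c < tfirst τ S h := memB (s2.subset (by simp))
      exact absurd ((hab.trans hbc).trans (hcB.trans haA)) (lt_irrefl _)
    · -- [b, a, c] <+ A
      have h3 : x1 = b ∧ x2 = a ∧ x3 = c ∧ l ++ l₂ = [] := by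
        simpa using heq.symm
      obtain ⟨rfl, rfl, rfl, hl⟩ := h3
      rw [List.append_eq_nil_iff] at hl
      rw [hl.1] at s1
      exact ih _ ssA hab hbc s1
end Aux

section Sigma
open List
variable {n : ℕ} (τ : Equiv.Perm (Fin n))

theorem index_lt_of_pair_sublist {α : Type*} {L : List α} (nd : L.Nodup) {i j : Fin L.length}
    (hsub : [L.get i, L.get j] <+ L) : i < j := by
  rw [List.sublist_iff_exists_fin_orderEmbedding_get_eq] at hsub
  obtain ⟨f, hf⟩ := hsub
  have h0 := hf ⟨0, by simp⟩
  have h1 := hf ⟨1, by simp⟩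
  replace h0 : L.get i = L.get (f ⟨0, by simp⟩) := h0
  have h1' : L.get j = L.get (f ⟨1, by simp⟩) := h1
  have hinj := List.nodup_iff_injective_get.1 nd
  rw [hinj h0, hinj h1']
  exact f.strictMono (by norm_num [Fin.mk_lt_mk])

theorem triple_sublist {α : Type*} (L : List α) {i j k : Fin L.length} (hij : i < j)
    (hjk : j < k) : [L.get i, L.get j, L.get k] <+ L := by
  rw [List.sublist_iff_exists_fin_orderEmbedding_get_eq]
  refine ⟨(OrderEmbedding.ofStrictMono (![i, j, k] : Fin 3 → Fin L.length)
    (strictMono_vec3 hij hjk) : Fin 3 ↪o Fin L.length), ?_⟩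
  intro ix
  fin_cases ix <;> simp

theorem length_build_univ : (build τ (Finset.univ : Finset (Fin n))).length = n := by
  have h1 : (build τ Finset.univ).toFinset = (Finset.univ : Finset (Fin n)) := by
    ext x; simp [mem_build]
  have h2 := List.toFinset_card_of_nodup (nodup_build τ (Finset.univ : Finset (Fin n)))
  rw [h1] at h2
  simpa using h2.symm

/-- The 213-avoiding input permutation producing `τ`. -/
noncomputable def sigmaPerm : Equiv.Perm (Fin n) :=
  Equiv.ofBijective
    (fun i => (build τ Finset.univ).get (Fin.cast (length_build_univ τ).symm i))
    (by
      have hinj : Function.Injective (build τ Finset.univ).get :=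
        List.nodup_iff_injective_get.1 (nodup_build τ _)
      exact Finite.injective_iff_bijective.1
        (hinj.comp fun a b hab => by simpa [Fin.ext_iff] using hab))

theorem sigmaPerm_symm_get (x : Fin n) :
    (build τ Finset.univ).get
      (Fin.cast (length_build_univ τ).symm ((sigmaPerm τ).symm x)) = x :=
  (sigmaPerm τ).apply_symm_apply x

theorem allowable_sigmaPerm (hτ : ¬ Contains p2143 τ) : Allowable (sigmaPerm τ) τ := by
  intro x y hxy
  have hsub : [x, y] <+ build τ Finset.univ :=
    ext_build τ hτ _ (Finset.mem_univ x) (Finset.mem_univ y) hxy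
  rw [← sigmaPerm_symm_get τ x, ← sigmaPerm_symm_get τ y] at hsub
  exact index_lt_of_pair_sublist (nodup_build τ _) hsub

theorem not_contains_sigmaPerm : ¬ Contains p213 (sigmaPerm τ) := by
  rintro ⟨f, hf⟩
  have hab : sigmaPerm τ (f 1) < sigmaPerm τ (f 0) :=
    (hf 1 0).1 (by simp [p213, Equiv.ofBijective])
  have hbc : sigmaPerm τ (f 0) < sigmaPerm τ (f 2) :=
    (hf 0 2).1 (by simp [p213, Equiv.ofBijective])
  have h01 : f 0 < f 1 := f.strictMono (by decide)
  have h12 : f 1 < f 2 := f.strictMono (by decide)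
  have hsub := triple_sublist (build τ Finset.univ)
    (i := Fin.cast (length_build_univ τ).symm (f 0))
    (j := Fin.cast (length_build_univ τ).symm (f 1))
    (k := Fin.cast (length_build_univ τ).symm (f 2))
    (by simpa [Fin.lt_def] using h01) (by simpa [Fin.lt_def] using h12)
  exact no213_build τ Finset.univ hab hbc hsub

end Sigma

/-- `Av(213)𝒜 = Av(2143)`. -/
theorem imageA_av213 :
    ImageA (Av {(⟨3, p213⟩ : PermSig)}) = Av {(⟨4, p2143⟩ : PermSig)} := by
  ext T
  obtain ⟨n, τ⟩ := T
  constructor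
  · rintro ⟨σ, hσ, hall⟩ β hβ
    rw [Set.mem_singleton_iff] at hβ
    subst hβ
    intro hcon
    exact hσ _ rfl (contains213_of_allowable τ hall hcon)
  · intro hτ
    have hτ' : ¬ Contains p2143 τ := hτ _ rfl
    refine ⟨sigmaPerm τ, ?_, allowable_sigmaPerm τ hτ'⟩
    rintro β hβ
    rw [Set.mem_singleton_iff] at hβ
    subst hβ
    exact not_contains_sigmaPerm τ
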